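/- Let A, B, C, D ∈ ℂ with C ≠ 0, A ≠ 0, and conj(A)·D = A·conj(B) − conj(B) + D. Set ψ(z) = C·e^{Dz}, φ(z) = Az + B, ψ̂(z) = conj(C)·e^{conj(B)·z}, φ̂(z) = conj(A)·z + conj(D), and M = exp(−|(B − conj(D))/A|² + 2·Re((|B|² − conj(B)·conj(D))/conj(A))). Then for every entire function f : ℂ → ℂ, ∫_ℂ |ψ̂(z)·f(φ̂(z))|²·e^{−|z|²} dV(z) = M·∫_ℂ |ψ(z)·f(φ(z))|²·e^{−|z|²} dV(z) (as an identity in [0,∞]). Moreover, if A = 1 then M = e^{|B|² − |D|²}, and if A ≠ 1 and D = conj(B)·(1 − A)·(1 − conj(A))^{−1} then M = 1. -/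

import Mathlib

open MeasureTheory Complex ComplexConjugate

private lemma wco_abs_sq (z : ℂ) : ((‖z‖ : ℂ))^2 = z * conj z := by
  rw [← Complex.ofReal_pow, ← Complex.normSq_eq_norm_sq, Complex.mul_conj]

private lemma wco_exp_sq (x : ℝ) : (Real.exp x)^2 = Real.exp (2*x) := by
  rw [pow_two, ← Real.exp_add, two_mul]

theorem wco_norm_change_of_variables (A B C D : ℂ) (hC : C ≠ 0) (hA : A ≠ 0)
    (hAD : conj A * D = A * conj B - conj B + D)
    (ψ φ ψh φh : ℂ → ℂ)
    (hψ : ∀ z : ℂ, ψ z = C * Complex.exp (D * z))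
    (hφ : ∀ z : ℂ, φ z = A * z + B)
    (hψh : ∀ z : ℂ, ψh z = conj C * Complex.exp (conj B * z))
    (hφh : ∀ z : ℂ, φh z = conj A * z + conj D)
    (M : ℝ)
    (hM : M = Real.exp (-(‖(B - conj D) / A‖) ^ 2 +
        2 * (((‖B‖ : ℂ) ^ 2 - conj B * conj D) / conj A).re)) :
    (∀ f : ℂ → ℂ, Differentiable ℂ f →
      ∫⁻ z : ℂ, ENNReal.ofReal
          ((‖ψh z * f (φh z)‖) ^ 2 * Real.exp (-(‖z‖) ^ 2)) =
        ENNReal.ofReal M * ∫⁻ z : ℂ, ENNReal.ofReal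
          ((‖ψ z * f (φ z)‖) ^ 2 * Real.exp (-(‖z‖) ^ 2))) ∧
    (A = 1 → M = Real.exp ((‖B‖) ^ 2 - (‖D‖) ^ 2)) ∧
    (A ≠ 1 → D = conj B * (1 - A) * (1 - conj A)⁻¹ → M = 1) := by
  have hc : (conj A : ℂ) ≠ 0 := by simpa using hA
  have hAD' : A * conj D = conj A * B - B + conj D := by
    have h := congrArg (starRingEnd ℂ) hAD
    simpa [map_mul, map_sub, map_add] using h
  refine ⟨?_, ?_, ?_⟩
  · -- main integral identity
    intro f hf
    have hM0 : (0:ℝ) ≤ M := hM ▸ (Real.exp_pos _).le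
    set T : ℂ → ℂ := fun y => (A / conj A) * y + (B - conj D) / conj A with hT
    -- T is measure preserving
    have hTmp : MeasurePreserving T volume volume := by
      have h1 := (rotation (Circle.ofConjDivSelf (conj A) hc)).measurePreserving
      have h2 := measurePreserving_add_right (volume : Measure ℂ) ((B - conj D) / conj A)
      have h3 := h2.comp h1
      have hTe : T = (fun x => x + (B - conj D) / conj A) ∘
          ⇑(rotation (Circle.ofConjDivSelf (conj A) hc)) := by
        funext y
        rw [Function.comp_apply, rotation_apply]
        simp [hT]
      rw [hTe]
      exact h3
    -- exponent identity
    have expo : ∀ y : ℂ,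
        2 * (conj B * T y).re - (‖T y‖)^2 =
        (-(‖(B - conj D) / A‖) ^ 2 +
          2 * (((‖B‖ : ℂ) ^ 2 - conj B * conj D) / conj A).re)
        + (2 * (D * y).re - (‖y‖)^2) := by
      intro y
      simp only [hT]
      rw [← Complex.ofReal_inj]
      push_cast
      simp only [wco_abs_sq, Complex.re_eq_add_conj]
      simp only [map_mul, map_sub, map_add, map_div₀, Complex.conj_conj, Complex.conj_ofReal]
      field_simp
      linear_combination (-(A*y)) * hAD + (-(conj A*(conj y))) * hAD'
    -- pointwise identity of integrands after change of variables
    have key : ∀ y : ℂ,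
        (‖ψh (T y) * f (φh (T y))‖)^2 * Real.exp (-(‖T y‖)^2)
        = M * ((‖ψ y * f (φ y)‖)^2 * Real.exp (-(‖y‖)^2)) := by
      intro y
      have hφhT : φh (T y) = φ y := by
        rw [hφh, hφ, hT]
        field_simp
        ring
      rw [hφhT, hψh, hψ, hM]
      simp only [norm_mul, Complex.norm_exp, Complex.norm_conj, mul_pow, wco_exp_sq]
      have hmerge : Real.exp (2 * (conj B * T y).re) * Real.exp (-(‖T y‖)^2)
          = Real.exp (-(‖(B - conj D) / A‖) ^ 2 +
              2 * (((‖B‖ : ℂ) ^ 2 - conj B * conj D) / conj A).re)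
            * (Real.exp (2 * (D * y).re) * Real.exp (-(‖y‖)^2)) := by
        rw [← Real.exp_add, ← Real.exp_add, ← Real.exp_add]
        exact congrArg Real.exp (by linarith [expo y])
      linear_combination (‖C‖ ^ 2 * ‖f (φ y)‖ ^ 2) * hmerge
    -- measurability
    have hmeas : Measurable fun z : ℂ => ENNReal.ofReal
        ((‖ψh z * f (φh z)‖) ^ 2 * Real.exp (-(‖z‖) ^ 2)) := by
      apply Measurable.ennreal_ofReal
      apply Continuous.measurable
      have hfc : Continuous f := hf.continuous
      have h1 : Continuous ψh := by
        rw [funext hψh]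
        exact continuous_const.mul (Complex.continuous_exp.comp (continuous_const.mul
          continuous_id))
      have h2 : Continuous φh := by
        rw [funext hφh]
        exact (continuous_const.mul continuous_id).add continuous_const
      exact ((continuous_norm.comp (h1.mul (hfc.comp h2))).pow 2).mul
        (Real.continuous_exp.comp (continuous_norm.pow 2).neg)
    calc ∫⁻ z : ℂ, ENNReal.ofReal
          ((‖ψh z * f (φh z)‖) ^ 2 * Real.exp (-(‖z‖) ^ 2))
        = ∫⁻ y : ℂ, ENNReal.ofReal
          ((‖ψh (T y) * f (φh (T y))‖) ^ 2 * Real.exp (-(‖T y‖) ^ 2)) :=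
          (hTmp.lintegral_comp hmeas).symm
      _ = ∫⁻ y : ℂ, ENNReal.ofReal M * ENNReal.ofReal
          ((‖ψ y * f (φ y)‖) ^ 2 * Real.exp (-(‖y‖) ^ 2)) :=
          lintegral_congr (fun y => by rw [key y, ENNReal.ofReal_mul hM0])
      _ = ENNReal.ofReal M * ∫⁻ y : ℂ, ENNReal.ofReal
          ((‖ψ y * f (φ y)‖) ^ 2 * Real.exp (-(‖y‖) ^ 2)) :=
          lintegral_const_mul' _ _ ENNReal.ofReal_ne_top
  · -- A = 1
    intro hA1
    subst hA1
    rw [hM]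
    congr 1
    rw [← Complex.ofReal_inj]
    push_cast
    simp only [wco_abs_sq, Complex.re_eq_add_conj]
    simp only [map_one, map_mul, map_sub, map_add, map_div₀, Complex.conj_conj,
      Complex.conj_ofReal]
    field_simp
    ring
  · -- A ≠ 1
    intro hA1 hD
    have h1A : (1:ℂ) - A ≠ 0 := sub_ne_zero.2 (fun h => hA1 h.symm)
    have h1c : (1:ℂ) - conj A ≠ 0 := by
      rw [sub_ne_zero]
      intro h
      exact hA1 (by simpa using congrArg (starRingEnd ℂ) h.symm)
    have hDc : conj D = B * (1 - conj A) * (1 - A)⁻¹ := by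
      have := congrArg (starRingEnd ℂ) hD
      simpa [map_mul, map_sub, map_one, map_inv₀] using this
    rw [hM]
    rw [show (-(‖(B - conj D) / A‖) ^ 2 +
        2 * (((‖B‖ : ℂ) ^ 2 - conj B * conj D) / conj A).re) = (0:ℝ) from ?_]
    · exact Real.exp_zero
    rw [← Complex.ofReal_inj]
    push_cast
    rw [hD]
    simp only [wco_abs_sq, Complex.re_eq_add_conj]
    simp only [map_mul, map_sub, map_add, map_div₀, map_one, map_inv₀, Complex.conj_conj,
      Complex.conj_ofReal]
    field_simp
    ring
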